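/- arXiv:2506.23165 — 2 statements merged into one kernel-verified Lean document; each statement's English description precedes it below -/
import Mathlib

section
/- Second performance difference lemma across transition kernels: for any two transition kernels p and p' and any policy π, V_{π,p}(ρ) − V_{π,p'}(ρ) = (1/(1−γ)) Σ_{s∈S} d_ρ^{π,p}(s) Σ_{a∈A} π(a|s) Σ_{s'∈S} (p(s'|s,a) − p'(s'|s,a))·(c(s,a,s') + γ·V_{π,p'}(s')). -/
open Finset

variable {S A : Type*}

/-- Expected one-step cost `c_{π,p}(s) = Σ_a π(a|s) Σ_{s'} p(s'|s,a) c(s,a,s')`. -/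
noncomputable def cPi [Fintype S] [Fintype A] (π : S → A → ℝ) (p : S → A → S → ℝ)
    (c : S → A → S → ℝ) (s : S) : ℝ :=
  ∑ a, π s a * ∑ s', p s a s' * c s a s'

/-- Induced state-transition matrix `M_{π,p}(s,s') = Σ_a π(a|s) p(s'|s,a)`. -/
noncomputable def matPi [Fintype A] (π : S → A → ℝ) (p : S → A → S → ℝ) :
    Matrix S S ℝ :=
  Matrix.of fun s s' => ∑ a, π s a * p s a s'

/-- Discounted value function `V_{π,p}(s) = Σ_{l} γ^l ((M_{π,p})^l c_{π,p})(s)`. -/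
noncomputable def Vf [Fintype S] [Fintype A] [DecidableEq S] (γ : ℝ) (π : S → A → ℝ)
    (p : S → A → S → ℝ) (c : S → A → S → ℝ) (s : S) : ℝ :=
  ∑' l : ℕ, γ ^ l * ((matPi π p ^ l).mulVec (cPi π p c)) s

/-- Value from an initial distribution, `V_{π,p}(ρ) = Σ_s ρ(s) V_{π,p}(s)`. -/
noncomputable def Vrho [Fintype S] [Fintype A] [DecidableEq S] (γ : ℝ) (ρ : S → ℝ)
    (π : S → A → ℝ) (p : S → A → S → ℝ) (c : S → A → S → ℝ) : ℝ :=
  ∑ s, ρ s * Vf γ π p c s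

/-- Discounted state visitation distribution
`d_ρ^{π,p}(s) = (1-γ) Σ_l γ^l Σ_{s₀} ρ(s₀) ((M_{π,p})^l)(s₀,s)`. -/
noncomputable def dvisit [Fintype S] [Fintype A] [DecidableEq S] (γ : ℝ) (ρ : S → ℝ)
    (π : S → A → ℝ) (p : S → A → S → ℝ) (s : S) : ℝ :=
  (1 - γ) * ∑' l : ℕ, γ ^ l * ∑ s₀, ρ s₀ * (matPi π p ^ l) s₀ s



section helpers

variable {S A : Type*} [Fintype S]

lemma matPow_nonneg [DecidableEq S] (M : Matrix S S ℝ) (h0 : ∀ i j, 0 ≤ M i j) :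
    ∀ (l : ℕ) (i j), 0 ≤ (M ^ l) i j := by
  intro l
  induction l with
  | zero =>
    intro i j
    rw [pow_zero]
    by_cases h : i = j <;> simp [Matrix.one_apply, h]
  | succ n ih =>
    intro i j
    rw [pow_succ, Matrix.mul_apply]
    exact Finset.sum_nonneg fun k _ => mul_nonneg (ih i k) (h0 k j)

lemma matPow_rowSum [DecidableEq S] (M : Matrix S S ℝ) (h1 : ∀ i, ∑ j, M i j = 1) :
    ∀ (l : ℕ) (i), ∑ j, (M ^ l) i j = 1 := by
  intro l
  induction l with
  | zero => intro i; simp [Matrix.one_apply]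
  | succ n ih =>
    intro i
    simp only [pow_succ, Matrix.mul_apply]
    rw [Finset.sum_comm]
    calc ∑ k, ∑ j, (M ^ n) i k * M k j = ∑ k, (M ^ n) i k * ∑ j, M k j := by
          simp [Finset.mul_sum]
      _ = 1 := by simp [h1, ih i]

lemma mulVec_abs_le (M : Matrix S S ℝ) (h0 : ∀ i j, 0 ≤ M i j) (h1 : ∀ i, ∑ j, M i j = 1)
    (v : S → ℝ) (C : ℝ) (hv : ∀ s, |v s| ≤ C) (s : S) : |M.mulVec v s| ≤ C := by
  have habs : |M.mulVec v s| ≤ ∑ j, |M s j * v j| := by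
    simpa [Matrix.mulVec, dotProduct] using
      Finset.abs_sum_le_sum_abs (fun j => M s j * v j) Finset.univ
  refine habs.trans ?_
  calc ∑ j, |M s j * v j| ≤ ∑ j, M s j * C := by
        refine Finset.sum_le_sum fun j _ => ?_
        rw [abs_mul, abs_of_nonneg (h0 s j)]
        exact mul_le_mul_of_nonneg_left (hv j) (h0 s j)
    _ = C := by rw [← Finset.sum_mul, h1 s, one_mul]

lemma summable_pow_mulVec [Nonempty S] [DecidableEq S] {γ : ℝ} (hγ0 : 0 ≤ γ) (hγ1 : γ < 1)
    (M : Matrix S S ℝ) (h0 : ∀ i j, 0 ≤ M i j) (h1 : ∀ i, ∑ j, M i j = 1)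
    (v : S → ℝ) (s : S) : Summable fun l : ℕ => γ ^ l * ((M ^ l).mulVec v) s := by
  set C := Finset.univ.sup' Finset.univ_nonempty (fun t : S => |v t|) with hC
  have hvC : ∀ t, |v t| ≤ C := fun t => Finset.le_sup' (fun t : S => |v t|) (Finset.mem_univ t)
  refine Summable.of_norm_bounded
    ((summable_geometric_of_lt_one hγ0 hγ1).mul_left C) fun l => ?_
  rw [Real.norm_eq_abs, abs_mul, abs_pow, abs_of_nonneg hγ0, mul_comm]
  exact mul_le_mul_of_nonneg_right
    (mulVec_abs_le _ (matPow_nonneg M h0 l) (matPow_rowSum M h1 l) v C hvC s)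
    (pow_nonneg hγ0 l)

lemma matPi_nonneg [Fintype A] (π : S → A → ℝ) (p : S → A → S → ℝ)
    (hπ0 : ∀ s a, 0 ≤ π s a) (hp0 : ∀ s a s', 0 ≤ p s a s') :
    ∀ i j, 0 ≤ matPi π p i j := fun i j =>
  Finset.sum_nonneg fun a _ => mul_nonneg (hπ0 i a) (hp0 i a j)

lemma matPi_rowSum [Fintype A] (π : S → A → ℝ) (p : S → A → S → ℝ)
    (hπ1 : ∀ s, ∑ a, π s a = 1) (hp1 : ∀ s a, ∑ s', p s a s' = 1) :
    ∀ i, ∑ j, matPi π p i j = 1 := by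
  intro i
  simp only [matPi, Matrix.of_apply]
  rw [Finset.sum_comm]
  calc ∑ a, ∑ j, π i a * p i a j = ∑ a, π i a * ∑ j, p i a j := by simp [Finset.mul_sum]
    _ = 1 := by simp [hp1, hπ1 i]

lemma mulVec_apply (N : Matrix S S ℝ) (w : S → ℝ) (t : S) :
    N.mulVec w t = ∑ j, N t j * w j := rfl

lemma vf_bellman [Fintype A] [DecidableEq S] [Nonempty S] {γ : ℝ} (hγ0 : 0 ≤ γ) (hγ1 : γ < 1)
    (π : S → A → ℝ) (hπ0 : ∀ s a, 0 ≤ π s a) (hπ1 : ∀ s, ∑ a, π s a = 1)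
    (p' : S → A → S → ℝ) (hp'0 : ∀ s a s', 0 ≤ p' s a s') (hp'1 : ∀ s a, ∑ s', p' s a s' = 1)
    (c : S → A → S → ℝ) (s : S) :
    Vf γ π p' c s = cPi π p' c s + γ * (matPi π p').mulVec (Vf γ π p' c) s := by
  set M' := matPi π p' with hM'def
  have h0 : ∀ i j, 0 ≤ M' i j := matPi_nonneg π p' hπ0 hp'0
  have h1 : ∀ i, ∑ j, M' i j = 1 := matPi_rowSum π p' hπ1 hp'1
  have hsum : ∀ (v : S → ℝ) (t : S), Summable fun l : ℕ => γ ^ l * ((M' ^ l).mulVec v) t :=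
    fun v t => summable_pow_mulVec hγ0 hγ1 M' h0 h1 v t
  have hVf : ∀ t, Vf γ π p' c t = ∑' l : ℕ, γ ^ l * ((M' ^ l).mulVec (cPi π p' c)) t :=
    fun t => rfl
  have key : ∀ l : ℕ, γ ^ (l + 1) * ((M' ^ (l + 1)).mulVec (cPi π p' c)) s
      = ∑ j, γ * (M' s j * (γ ^ l * ((M' ^ l).mulVec (cPi π p' c)) j)) := by
    intro l
    rw [show (M' ^ (l + 1) : Matrix S S ℝ) = M' * M' ^ l from pow_succ' M' l,
      ← Matrix.mulVec_mulVec, mulVec_apply, Finset.mul_sum]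
    exact Finset.sum_congr rfl fun j _ => by ring
  rw [hVf s, Summable.tsum_eq_zero_add (hsum _ s)]
  congr 1
  · simp [mulVec_apply, Matrix.one_apply]
  · rw [tsum_congr key,
      Summable.tsum_finsetSum (f := fun j l => γ * (M' s j * (γ ^ l * ((M' ^ l).mulVec (cPi π p' c)) j)))
        (fun j _ => ((hsum _ j).mul_left _).mul_left _)]
    rw [mulVec_apply, Finset.mul_sum]
    refine Finset.sum_congr rfl fun j _ => ?_
    rw [tsum_mul_left, tsum_mul_left, ← hVf j]

lemma tsum_telescope_pdl [DecidableEq S] [Nonempty S] {γ : ℝ} (hγ0 : 0 ≤ γ) (hγ1 : γ < 1)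
    (M : Matrix S S ℝ) (h0 : ∀ i j, 0 ≤ M i j) (h1 : ∀ i, ∑ j, M i j = 1)
    (v : S → ℝ) (s : S) :
    ∑' l : ℕ, (γ ^ (l + 1) * ((M ^ (l + 1)).mulVec v) s - γ ^ l * ((M ^ l).mulVec v) s)
      = -v s := by
  set f : ℕ → ℝ := fun l => γ ^ l * ((M ^ l).mulVec v) s with hfdef
  have hf : Summable f := summable_pow_mulVec hγ0 hγ1 M h0 h1 v s
  have hf1 : Summable fun l => f (l + 1) := (summable_nat_add_iff 1).mpr hf
  have hsplit := Summable.tsum_eq_zero_add hf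
  have hf0 : f 0 = v s := by simp [hfdef, mulVec_apply, Matrix.one_apply]
  calc ∑' l : ℕ, (γ ^ (l + 1) * ((M ^ (l + 1)).mulVec v) s - γ ^ l * ((M ^ l).mulVec v) s)
      = ∑' l : ℕ, (f (l + 1) - f l) := rfl
    _ = (∑' l : ℕ, f (l + 1)) - ∑' l : ℕ, f l := Summable.tsum_sub hf1 hf
    _ = -v s := by rw [← hf0]; linarith [hsplit]

end helpers

/-- Second performance difference lemma across transition kernels:
`V_{π,p}(ρ) - V_{π,p'}(ρ) = (1/(1-γ)) Σ_s d_ρ^{π,p}(s) Σ_a π(a|s)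
  Σ_{s'} (p(s'|s,a) - p'(s'|s,a)) (c(s,a,s') + γ V_{π,p'}(s'))`. -/
theorem performance_difference_transitions_second
    [Fintype S] [Fintype A] [DecidableEq S] [Nonempty S] [Nonempty A]
    (γ : ℝ) (hγ0 : 0 ≤ γ) (hγ1 : γ < 1)
    (c : S → A → S → ℝ)
    (π : S → A → ℝ) (hπ0 : ∀ s a, 0 ≤ π s a) (hπ1 : ∀ s, ∑ a, π s a = 1)
    (p p' : S → A → S → ℝ)
    (hp0 : ∀ s a s', 0 ≤ p s a s') (hp1 : ∀ s a, ∑ s', p s a s' = 1)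
    (hp'0 : ∀ s a s', 0 ≤ p' s a s') (hp'1 : ∀ s a, ∑ s', p' s a s' = 1)
    (ρ : S → ℝ) (hρ0 : ∀ s, 0 ≤ ρ s) (hρ1 : ∑ s, ρ s = 1) :
    Vrho γ ρ π p c - Vrho γ ρ π p' c =
      (1 / (1 - γ)) * ∑ s, dvisit γ ρ π p s * ∑ a, π s a *
        ∑ s', (p s a s' - p' s a s') * (c s a s' + γ * Vf γ π p' c s') := by
  have hM0 : ∀ i j, 0 ≤ matPi π p i j := matPi_nonneg π p hπ0 hp0
  have hM1 : ∀ i, ∑ j, matPi π p i j = 1 := matPi_rowSum π p hπ1 hp1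
  set M := matPi π p with hMdef
  set V' := Vf γ π p' c with hV'def
  set cp := cPi π p c with hcpdef
  set g : S → ℝ := fun s => cp s + γ * (M.mulVec V') s - V' s with hgdef
  have hsumM : ∀ (v : S → ℝ) (s : S), Summable fun l : ℕ => γ ^ l * ((M ^ l).mulVec v) s :=
    fun v s => summable_pow_mulVec hγ0 hγ1 M hM0 hM1 v s
  have hγne : (1 : ℝ) - γ ≠ 0 := by linarith
  -- Step B: the inner double sum equals g s
  have hB : ∀ s, (∑ a, π s a * ∑ s', (p s a s' - p' s a s') * (c s a s' + γ * V' s')) = g s := by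
    intro s
    have bell := vf_bellman hγ0 hγ1 π hπ0 hπ1 p' hp'0 hp'1 c s
    have expand : ∑ a, π s a * ∑ s', (p s a s' - p' s a s') * (c s a s' + γ * V' s')
        = ∑ a, (π s a * ∑ s', p s a s' * c s a s'
            + γ * (π s a * ∑ s', p s a s' * V' s')
            - (π s a * ∑ s', p' s a s' * c s a s'
              + γ * (π s a * ∑ s', p' s a s' * V' s'))) := by
      refine Finset.sum_congr rfl fun a _ => ?_
      simp only [Finset.mul_sum]
      rw [← Finset.sum_add_distrib, ← Finset.sum_add_distrib, ← Finset.sum_sub_distrib]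
      exact Finset.sum_congr rfl fun s' _ => by ring
    have hMV : (M.mulVec V') s = ∑ a, π s a * ∑ s', p s a s' * V' s' := by
      rw [mulVec_apply]
      simp only [hMdef, matPi, Matrix.of_apply, Finset.sum_mul]
      rw [Finset.sum_comm]
      refine Finset.sum_congr rfl fun a _ => ?_
      rw [Finset.mul_sum]
      exact Finset.sum_congr rfl fun j _ => by ring
    have hM'V : ((matPi π p').mulVec V') s = ∑ a, π s a * ∑ s', p' s a s' * V' s' := by
      rw [mulVec_apply]
      simp only [matPi, Matrix.of_apply, Finset.sum_mul]
      rw [Finset.sum_comm]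
      refine Finset.sum_congr rfl fun a _ => ?_
      rw [Finset.mul_sum]
      exact Finset.sum_congr rfl fun j _ => by ring
    have hcp : cp s = ∑ a, π s a * ∑ s', p s a s' * c s a s' := rfl
    have hcp' : cPi π p' c s = ∑ a, π s a * ∑ s', p' s a s' * c s a s' := rfl
    rw [expand, Finset.sum_sub_distrib, Finset.sum_add_distrib, Finset.sum_add_distrib,
      ← Finset.mul_sum, ← Finset.mul_sum, ← hcp, ← hcp', ← hMV, ← hM'V, ← bell]
  -- Step D: pointwise telescoping identity
  have hD : ∀ s, (∑' l : ℕ, γ ^ l * ((M ^ l).mulVec g) s) = Vf γ π p c s - V' s := by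
    intro s
    have hterm : ∀ l : ℕ, γ ^ l * ((M ^ l).mulVec g) s
        = γ ^ l * ((M ^ l).mulVec cp) s
          + (γ ^ (l + 1) * ((M ^ (l + 1)).mulVec V') s - γ ^ l * ((M ^ l).mulVec V') s) := by
      intro l
      have hMM : ((M ^ (l + 1)).mulVec V') s = ((M ^ l).mulVec (M.mulVec V')) s := by
        rw [Matrix.mulVec_mulVec, ← pow_succ]
      rw [hMM, mulVec_apply, mulVec_apply, mulVec_apply, mulVec_apply]
      simp only [hgdef, Finset.mul_sum]
      rw [← Finset.sum_sub_distrib, ← Finset.sum_add_distrib]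
      exact Finset.sum_congr rfl fun j _ => by ring
    have hVfp : Vf γ π p c s = ∑' l : ℕ, γ ^ l * ((M ^ l).mulVec cp) s := rfl
    rw [tsum_congr hterm,
      Summable.tsum_add (hsumM cp s)
        (((summable_nat_add_iff 1).mpr (hsumM V' s)).sub (hsumM V' s)),
      tsum_telescope_pdl hγ0 hγ1 M hM0 hM1 V' s, ← hVfp]
    ring
  -- summability for the visitation series
  have hwbound : ∀ (l : ℕ) (s : S), |∑ s₀, ρ s₀ * (M ^ l) s₀ s| ≤ 1 := by
    intro l s
    have h0' := matPow_nonneg M hM0 l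
    rw [abs_of_nonneg (Finset.sum_nonneg fun s₀ _ => mul_nonneg (hρ0 s₀) (h0' s₀ s))]
    calc ∑ s₀, ρ s₀ * (M ^ l) s₀ s ≤ ∑ s₀, ρ s₀ * 1 := by
          refine Finset.sum_le_sum fun s₀ _ => mul_le_mul_of_nonneg_left ?_ (hρ0 s₀)
          calc (M ^ l) s₀ s ≤ ∑ j, (M ^ l) s₀ j :=
                Finset.single_le_sum (fun j _ => h0' s₀ j) (Finset.mem_univ s)
            _ = 1 := matPow_rowSum M hM1 l s₀
      _ = 1 := by simp [hρ1]
  have hsumw : ∀ s, Summable fun l : ℕ => γ ^ l * (∑ s₀, ρ s₀ * (M ^ l) s₀ s) * g s := by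
    intro s
    refine Summable.of_norm_bounded
      ((summable_geometric_of_lt_one hγ0 hγ1).mul_left |g s|) fun l => ?_
    rw [Real.norm_eq_abs, abs_mul, abs_mul, abs_pow, abs_of_nonneg hγ0]
    calc γ ^ l * |∑ s₀, ρ s₀ * (M ^ l) s₀ s| * |g s| ≤ γ ^ l * 1 * |g s| := by
          refine mul_le_mul_of_nonneg_right
            (mul_le_mul_of_nonneg_left (hwbound l s) (pow_nonneg hγ0 l)) (abs_nonneg _)
      _ = |g s| * γ ^ l := by ring
  -- Step C: RHS as a tsum
  have hRHS : (1 / (1 - γ)) * ∑ s, dvisit γ ρ π p s * ∑ a, π s a *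
        ∑ s', (p s a s' - p' s a s') * (c s a s' + γ * V' s')
      = ∑' l : ℕ, ∑ s, γ ^ l * (∑ s₀, ρ s₀ * (M ^ l) s₀ s) * g s := by
    have step1 : ∀ s, dvisit γ ρ π p s * ∑ a, π s a *
          ∑ s', (p s a s' - p' s a s') * (c s a s' + γ * V' s')
        = (1 - γ) * ∑' l : ℕ, γ ^ l * (∑ s₀, ρ s₀ * (M ^ l) s₀ s) * g s := by
      intro s
      rw [hB s]
      have hd : dvisit γ ρ π p s = (1 - γ) * ∑' l : ℕ, γ ^ l * ∑ s₀, ρ s₀ * (M ^ l) s₀ s := rfl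
      rw [hd, mul_assoc, ← tsum_mul_right]
    calc (1 / (1 - γ)) * ∑ s, dvisit γ ρ π p s * ∑ a, π s a *
          ∑ s', (p s a s' - p' s a s') * (c s a s' + γ * V' s')
        = (1 / (1 - γ)) * ∑ s, (1 - γ) * ∑' l : ℕ, γ ^ l * (∑ s₀, ρ s₀ * (M ^ l) s₀ s) * g s := by
          rw [Finset.sum_congr rfl fun s _ => step1 s]
      _ = ∑ s, ∑' l : ℕ, γ ^ l * (∑ s₀, ρ s₀ * (M ^ l) s₀ s) * g s := by
          rw [← Finset.mul_sum, ← mul_assoc, one_div, inv_mul_cancel₀ hγne, one_mul]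
      _ = ∑' l : ℕ, ∑ s, γ ^ l * (∑ s₀, ρ s₀ * (M ^ l) s₀ s) * g s :=
          (Summable.tsum_finsetSum (fun s _ => hsumw s)).symm
  -- swap the finite sums inside
  have hswap : ∀ l : ℕ, ∑ s, γ ^ l * (∑ s₀, ρ s₀ * (M ^ l) s₀ s) * g s
      = ∑ s₀, ρ s₀ * (γ ^ l * ((M ^ l).mulVec g) s₀) := by
    intro l
    have step : ∀ s, γ ^ l * (∑ s₀, ρ s₀ * (M ^ l) s₀ s) * g s
        = ∑ s₀, ρ s₀ * (γ ^ l * ((M ^ l) s₀ s * g s)) := by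
      intro s
      rw [Finset.mul_sum, Finset.sum_mul]
      exact Finset.sum_congr rfl fun s₀ _ => by ring
    rw [Finset.sum_congr rfl fun s _ => step s, Finset.sum_comm]
    refine Finset.sum_congr rfl fun s₀ _ => ?_
    rw [mulVec_apply, Finset.mul_sum, Finset.mul_sum]
  have hfinal : (∑' l : ℕ, ∑ s, γ ^ l * (∑ s₀, ρ s₀ * (M ^ l) s₀ s) * g s)
      = ∑ s₀, ρ s₀ * (Vf γ π p c s₀ - V' s₀) := by
    calc (∑' l : ℕ, ∑ s, γ ^ l * (∑ s₀, ρ s₀ * (M ^ l) s₀ s) * g s)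
        = ∑' l : ℕ, ∑ s₀, ρ s₀ * (γ ^ l * ((M ^ l).mulVec g) s₀) := tsum_congr hswap
      _ = ∑ s₀, ∑' l : ℕ, ρ s₀ * (γ ^ l * ((M ^ l).mulVec g) s₀) :=
          Summable.tsum_finsetSum (fun s₀ _ => (hsumM g s₀).mul_left _)
      _ = ∑ s₀, ρ s₀ * (Vf γ π p c s₀ - V' s₀) :=
          Finset.sum_congr rfl fun s₀ _ => by rw [tsum_mul_left, hD s₀]
  rw [hRHS, hfinal]
  simp only [Vrho, hV'def, mul_sub]
  rw [← Finset.sum_sub_distrib]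
end

section
/- Ascent property of Approximate TMA: let ε' > 0, let π be a policy, let p and p' be transition kernels, and let Ĝ : S×A×S → ℝ be an estimate of the action next-state value function satisfying max_{(s,a,s')} |Ĝ(s,a,s') − G_{π,p}(s,a,s')| ≤ ε'. Suppose that for every (s,a) ∈ S×A, Σ_{s'∈S} (p(s'|s,a) − p'(s'|s,a))·Ĝ(s,a,s') ≤ 0 (the ascent condition satisfied by the Approximate TMA update producing p' from p). Then V_{π,p}(ρ) − V_{π,p'}(ρ) ≤ 2ε'/(1−γ). -/
open Finset

variable {S A : Type*}

section Aux
set_option linter.unusedSectionVars false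
variable [Fintype S] [Nonempty S]

def IsStoch [Fintype S] (N : Matrix S S ℝ) : Prop :=
  (∀ s s', 0 ≤ N s s') ∧ (∀ s, ∑ s', N s s' = 1)

lemma isStoch_mul {N M : Matrix S S ℝ} (hN : IsStoch N) (hM : IsStoch M) :
    IsStoch (N * M) := by
  constructor
  · intro s s'
    exact Finset.sum_nonneg fun t _ => mul_nonneg (hN.1 s t) (hM.1 t s')
  · intro s
    simp only [Matrix.mul_apply]
    rw [Finset.sum_comm]
    simp [← Finset.mul_sum, hM.2, hN.2 s]

lemma isStoch_pow [DecidableEq S] {N : Matrix S S ℝ} (hN : IsStoch N) (l : ℕ) :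
    IsStoch (N ^ l) := by
  induction l with
  | zero =>
    refine ⟨fun s s' => ?_, fun s => ?_⟩ <;> simp [Matrix.one_apply]
    · positivity
  | succ n ih =>
    rw [pow_succ]
    exact isStoch_mul ih hN

lemma mulVec_abs_le_s11 {N : Matrix S S ℝ} (hN : IsStoch N) {v : S → ℝ} {C : ℝ}
    (hv : ∀ s, |v s| ≤ C) (s : S) : |N.mulVec v s| ≤ C := by
  calc |N.mulVec v s| = |∑ s', N s s' * v s'| := rfl
    _ ≤ ∑ s', |N s s' * v s'| := Finset.abs_sum_le_sum_abs _ _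
    _ ≤ ∑ s', N s s' * C := by
        refine Finset.sum_le_sum fun s' _ => ?_
        rw [abs_mul, abs_of_nonneg (hN.1 s s')]
        exact mul_le_mul_of_nonneg_left (hv s') (hN.1 s s')
    _ = C := by rw [← Finset.sum_mul, hN.2 s, one_mul]

lemma mulVec_le {N : Matrix S S ℝ} (hN : IsStoch N) {v : S → ℝ} {C : ℝ}
    (hv : ∀ s, v s ≤ C) (s : S) : N.mulVec v s ≤ C := by
  calc N.mulVec v s = ∑ s', N s s' * v s' := rfl
    _ ≤ ∑ s', N s s' * C :=
        Finset.sum_le_sum fun s' _ => mul_le_mul_of_nonneg_left (hv s') (hN.1 s s')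
    _ = C := by rw [← Finset.sum_mul, hN.2 s, one_mul]

lemma fixed_point_bound (γ : ℝ) (hγ0 : 0 ≤ γ) (hγ1 : γ < 1)
    (N : Matrix S S ℝ) (hN : IsStoch N)
    (Δ g : S → ℝ) (hfix : ∀ s, Δ s = g s + γ * N.mulVec Δ s)
    (B : ℝ) (hg : ∀ s, g s ≤ B) (s : S) : Δ s ≤ B / (1 - γ) := by
  obtain ⟨s0, -, hs0⟩ := Finset.exists_mem_eq_sup' Finset.univ_nonempty Δ
  set m := Finset.univ.sup' Finset.univ_nonempty Δ with hm
  have hle : ∀ t, Δ t ≤ m := fun t => Finset.le_sup' Δ (Finset.mem_univ t)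
  have hNΔ : N.mulVec Δ s0 ≤ m := mulVec_le hN hle s0
  have h1 : m ≤ B + γ * m := by
    calc m = g s0 + γ * N.mulVec Δ s0 := by rw [hs0, hfix s0]
      _ ≤ B + γ * m := add_le_add (hg s0) (mul_le_mul_of_nonneg_left hNΔ hγ0)

  have hmB : m ≤ B / (1 - γ) := by
    rw [le_div_iff₀ (by linarith)]
    nlinarith
  exact (hle s).trans hmB

end Aux

section Bellman
set_option linter.unusedSectionVars false
variable [Fintype S] [Fintype A] [DecidableEq S] [Nonempty S]

lemma matPi_stoch (π : S → A → ℝ) (p : S → A → S → ℝ)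
    (hπ0 : ∀ s a, 0 ≤ π s a) (hπ1 : ∀ s, ∑ a, π s a = 1)
    (hp0 : ∀ s a s', 0 ≤ p s a s') (hp1 : ∀ s a, ∑ s', p s a s' = 1) :
    IsStoch (matPi π p) := by
  constructor
  · intro s s'; exact Finset.sum_nonneg fun a _ => mul_nonneg (hπ0 s a) (hp0 s a s')
  · intro s
    simp only [matPi, Matrix.of_apply]
    rw [Finset.sum_comm]
    simp [← Finset.mul_sum, hp1, hπ1]

lemma summable_Vf (γ : ℝ) (hγ0 : 0 ≤ γ) (hγ1 : γ < 1) {M : Matrix S S ℝ} (hM : IsStoch M)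
    (v : S → ℝ) (s : S) :
    Summable (fun l : ℕ => γ ^ l * ((M ^ l).mulVec v) s) := by
  obtain ⟨C, hC⟩ : ∃ C, ∀ t, |v t| ≤ C :=
    ⟨Finset.univ.sup' Finset.univ_nonempty (fun t => |v t|),
     fun t => Finset.le_sup' (fun t => |v t|) (Finset.mem_univ t)⟩
  apply Summable.of_norm_bounded (g := fun l => C * γ ^ l)
    ((summable_geometric_of_lt_one hγ0 hγ1).mul_left C)
  intro l
  rw [Real.norm_eq_abs, abs_mul, abs_pow, abs_of_nonneg hγ0, mul_comm C]
  exact mul_le_mul_of_nonneg_left (mulVec_abs_le_s11 (isStoch_pow hM l) hC s) (pow_nonneg hγ0 l)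

lemma bellman (γ : ℝ) (hγ0 : 0 ≤ γ) (hγ1 : γ < 1)
    (π : S → A → ℝ) (p : S → A → S → ℝ) (c : S → A → S → ℝ)
    (hπ0 : ∀ s a, 0 ≤ π s a) (hπ1 : ∀ s, ∑ a, π s a = 1)
    (hp0 : ∀ s a s', 0 ≤ p s a s') (hp1 : ∀ s a, ∑ s', p s a s' = 1) (s : S) :
    Vf γ π p c s = cPi π p c s + γ * (matPi π p).mulVec (Vf γ π p c) s := by
  have hM := matPi_stoch π p hπ0 hπ1 hp0 hp1
  set M := matPi π p with hMdef
  set v := cPi π p c with hvdef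
  have hsum : ∀ t, Summable (fun l : ℕ => γ ^ l * ((M ^ l).mulVec v) t) :=
    fun t => summable_Vf γ hγ0 hγ1 hM v t
  have h0 : Vf γ π p c s = v s + ∑' l : ℕ, γ ^ (l+1) * ((M ^ (l+1)).mulVec v) s := by
    rw [Vf, Summable.tsum_eq_zero_add (hsum s)]
    simp [← hMdef, ← hvdef]
  rw [h0]
  congr 1
  have key : ∀ l : ℕ, γ ^ (l+1) * ((M ^ (l+1)).mulVec v) s
      = ∑ s', (γ * M s s') * (γ ^ l * ((M ^ l).mulVec v) s') := by
    intro l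
    have hps : M ^ (l+1) = M * M ^ l := pow_succ' M l
    rw [hps, ← Matrix.mulVec_mulVec]
    simp only [Matrix.mulVec, dotProduct, Finset.mul_sum]
    refine Finset.sum_congr rfl fun s' _ => ?_
    refine Finset.sum_congr rfl fun x _ => ?_
    ring
  calc ∑' l : ℕ, γ ^ (l+1) * ((M ^ (l+1)).mulVec v) s
      = ∑' l : ℕ, ∑ s', (γ * M s s') * (γ ^ l * ((M ^ l).mulVec v) s') := tsum_congr key
    _ = ∑ s', ∑' l : ℕ, (γ * M s s') * (γ ^ l * ((M ^ l).mulVec v) s') :=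
        Summable.tsum_finsetSum fun s' _ => (hsum s').mul_left _
    _ = ∑ s', (γ * M s s') * Vf γ π p c s' := by
        refine Finset.sum_congr rfl fun s' _ => ?_
        rw [tsum_mul_left, Vf]
    _ = γ * M.mulVec (Vf γ π p c) s := by
        simp [Matrix.mulVec, dotProduct, Finset.mul_sum, mul_assoc]

end Bellman

set_option linter.unusedSectionVars false in
lemma mulVec_matPi [Fintype S] [Fintype A] (π : S → A → ℝ) (p : S → A → S → ℝ)
    (w : S → ℝ) (s : S) :
    (matPi π p).mulVec w s = ∑ a, π s a * ∑ s', p s a s' * w s' := by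
  simp only [Matrix.mulVec, dotProduct, matPi, Matrix.of_apply, Finset.sum_mul]
  rw [Finset.sum_comm]
  simp [Finset.mul_sum, mul_assoc]

private theorem approximate_tma_ascent_property_aux
    [Fintype S] [Fintype A] [DecidableEq S] [Nonempty S] [Nonempty A]
    (γ : ℝ) (hγ0 : 0 ≤ γ) (hγ1 : γ < 1)
    (c : S → A → S → ℝ)
    (π : S → A → ℝ) (hπ0 : ∀ s a, 0 ≤ π s a) (hπ1 : ∀ s, ∑ a, π s a = 1)
    (p p' : S → A → S → ℝ)
    (hp0 : ∀ s a s', 0 ≤ p s a s') (hp1 : ∀ s a, ∑ s', p s a s' = 1)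
    (hp'0 : ∀ s a s', 0 ≤ p' s a s') (hp'1 : ∀ s a, ∑ s', p' s a s' = 1)
    (ρ : S → ℝ) (hρ0 : ∀ s, 0 ≤ ρ s) (hρ1 : ∑ s, ρ s = 1)
    (ε' : ℝ) (hε' : 0 < ε')
    (Ghat : S → A → S → ℝ)
    (hGhat : ∀ s a s', |Ghat s a s' - (c s a s' + γ * Vf γ π p c s')| ≤ ε')
    (hascent : ∀ s a, ∑ s', (p s a s' - p' s a s') * Ghat s a s' ≤ 0) :
    (∑ s, ρ s * Vf γ π p c s) - (∑ s, ρ s * Vf γ π p' c s) ≤ 2 * ε' / (1 - γ) := by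
  have hM' := matPi_stoch π p' hπ0 hπ1 hp'0 hp'1
  set Vp := Vf γ π p c with hVp
  set Vp' := Vf γ π p' c with hVp'
  set Δ : S → ℝ := fun s => Vp s - Vp' s with hΔ
  set g : S → ℝ := fun s =>
    ∑ a, π s a * ∑ s', (p s a s' - p' s a s') * (c s a s' + γ * Vp s') with hgdef
  have hfix : ∀ s, Δ s = g s + γ * (matPi π p').mulVec Δ s := by
    intro s
    have hb := bellman γ hγ0 hγ1 π p c hπ0 hπ1 hp0 hp1 s
    have hb' := bellman γ hγ0 hγ1 π p' c hπ0 hπ1 hp'0 hp'1 s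
    rw [mulVec_matPi] at hb hb' ⊢
    rw [← hVp] at hb
    rw [← hVp'] at hb'
    show Vp s - Vp' s = g s + _
    rw [hb, hb', hgdef]
    simp only [hΔ, cPi]
    simp only [mul_add, add_mul, sub_mul, mul_sub, Finset.mul_sum,
      Finset.sum_add_distrib, Finset.sum_sub_distrib]
    ring_nf
  have hgB : ∀ s, g s ≤ 2 * ε' := by
    intro s
    have key : ∀ a : A, ∑ s', (p s a s' - p' s a s') * (c s a s' + γ * Vp s') ≤ 2 * ε' := by
      intro a
      have h1 : ∑ s', (p s a s' - p' s a s') * (c s a s' + γ * Vp s')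
          = ∑ s', (p s a s' - p' s a s') * Ghat s a s'
            + ∑ s', (p s a s' - p' s a s') * ((c s a s' + γ * Vp s') - Ghat s a s') := by
        rw [← Finset.sum_add_distrib]
        exact Finset.sum_congr rfl fun s' _ => by ring
      have h2 : ∑ s', (p s a s' - p' s a s') * ((c s a s' + γ * Vp s') - Ghat s a s')
          ≤ ∑ s', (p s a s' + p' s a s') * ε' := by
        refine Finset.sum_le_sum fun s' _ => ?_
        calc (p s a s' - p' s a s') * ((c s a s' + γ * Vp s') - Ghat s a s')
            ≤ |(p s a s' - p' s a s') * ((c s a s' + γ * Vp s') - Ghat s a s')| :=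
              le_abs_self _
          _ = |p s a s' - p' s a s'| * |(c s a s' + γ * Vp s') - Ghat s a s'| := abs_mul _ _
          _ ≤ (p s a s' + p' s a s') * ε' := by
              refine mul_le_mul ?_ ?_ (abs_nonneg _) ?_
              · calc |p s a s' - p' s a s'| ≤ |p s a s'| + |p' s a s'| := abs_sub _ _
                  _ = p s a s' + p' s a s' := by
                      rw [abs_of_nonneg (hp0 s a s'), abs_of_nonneg (hp'0 s a s')]
              · rw [abs_sub_comm]; exact hGhat s a s'
              · exact add_nonneg (hp0 s a s') (hp'0 s a s')
      have h3 : ∑ s', (p s a s' + p' s a s') * ε' = 2 * ε' := by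
        rw [← Finset.sum_mul, Finset.sum_add_distrib, hp1, hp'1]; ring
      calc ∑ s', (p s a s' - p' s a s') * (c s a s' + γ * Vp s')
          = _ + _ := h1
        _ ≤ 0 + 2 * ε' := add_le_add (hascent s a) (h3 ▸ h2)
        _ = 2 * ε' := zero_add _
    calc g s ≤ ∑ a, π s a * (2 * ε') :=
          Finset.sum_le_sum fun a _ => mul_le_mul_of_nonneg_left (key a) (hπ0 s a)
      _ = 2 * ε' := by rw [← Finset.sum_mul, hπ1, one_mul]
  have hΔB : ∀ s, Δ s ≤ 2 * ε' / (1 - γ) :=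
    fixed_point_bound γ hγ0 hγ1 _ hM' Δ g hfix (2 * ε') hgB
  calc (∑ s, ρ s * Vp s) - (∑ s, ρ s * Vp' s)
      = ∑ s, ρ s * Δ s := by rw [← Finset.sum_sub_distrib]; exact Finset.sum_congr rfl fun s _ => by simp [hΔ]; ring
    _ ≤ ∑ s, ρ s * (2 * ε' / (1 - γ)) :=
        Finset.sum_le_sum fun s _ => mul_le_mul_of_nonneg_left (hΔB s) (hρ0 s)
    _ = 2 * ε' / (1 - γ) := by rw [← Finset.sum_mul, hρ1, one_mul]

/-- Ascent property of Approximate TMA: if `Ĝ` is an `ε'`-accurate estimate of the action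
next-state value function `G_{π,p}(s,a,s') = c(s,a,s') + γ V_{π,p}(s')` and the update
producing `p'` from `p` satisfies the ascent condition
`Σ_{s'} (p(s'|s,a) - p'(s'|s,a)) Ĝ(s,a,s') ≤ 0` for all `(s,a)`, then
`V_{π,p}(ρ) - V_{π,p'}(ρ) ≤ 2ε'/(1-γ)`. -/
theorem approximate_tma_ascent_property
    [Fintype S] [Fintype A] [DecidableEq S] [Nonempty S] [Nonempty A]
    (γ : ℝ) (hγ0 : 0 ≤ γ) (hγ1 : γ < 1)
    (c : S → A → S → ℝ)
    (π : S → A → ℝ) (hπ0 : ∀ s a, 0 ≤ π s a) (hπ1 : ∀ s, ∑ a, π s a = 1)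
    (p p' : S → A → S → ℝ)
    (hp0 : ∀ s a s', 0 ≤ p s a s') (hp1 : ∀ s a, ∑ s', p s a s' = 1)
    (hp'0 : ∀ s a s', 0 ≤ p' s a s') (hp'1 : ∀ s a, ∑ s', p' s a s' = 1)
    (ρ : S → ℝ) (hρ0 : ∀ s, 0 ≤ ρ s) (hρ1 : ∑ s, ρ s = 1)
    (ε' : ℝ) (hε' : 0 < ε')
    (Ghat : S → A → S → ℝ)
    (hGhat : ∀ s a s', |Ghat s a s' - (c s a s' + γ * Vf γ π p c s')| ≤ ε')
    (hascent : ∀ s a, ∑ s', (p s a s' - p' s a s') * Ghat s a s' ≤ 0) :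
    Vrho γ ρ π p c - Vrho γ ρ π p' c ≤ 2 * ε' / (1 - γ) := by
  simp only [Vrho]
  exact approximate_tma_ascent_property_aux γ hγ0 hγ1 c π hπ0 hπ1 p p' hp0 hp1 hp'0 hp'1
    ρ hρ0 hρ1 ε' hε' Ghat hGhat hascent
end
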